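/- Let (X, 𝒰, ∫) be a Daniell space, let f : X → ℝ and f_n ∈ 𝒰 with f ≃ ∑ f_n. If f(x) ≥ 0 for every x ∈ X, then ∑_{n=1}^∞ ∫ f_n ≥ 0 (the series converging absolutely by condition (A)). -/

import Mathlib

open Filter Topology

/-- A Daniell space: a Riesz space `U` of real-valued functions on `X` together with a
positive linear functional `integral` satisfying the Daniell continuity condition (II). -/
structure DaniellSpace (X : Type*) where
  U : Set (X → ℝ)
  integral : (X → ℝ) → ℝ
  zero_mem : (0 : X → ℝ) ∈ U
  add_mem : ∀ {f g : X → ℝ}, f ∈ U → g ∈ U → f + g ∈ U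
  smul_mem : ∀ (c : ℝ) {f : X → ℝ}, f ∈ U → c • f ∈ U
  sup_mem : ∀ {f g : X → ℝ}, f ∈ U → g ∈ U → f ⊔ g ∈ U
  inf_mem : ∀ {f g : X → ℝ}, f ∈ U → g ∈ U → f ⊓ g ∈ U
  integral_add : ∀ {f g : X → ℝ}, f ∈ U → g ∈ U →
    integral (f + g) = integral f + integral g
  integral_smul : ∀ (c : ℝ) {f : X → ℝ}, f ∈ U → integral (c • f) = c * integral f
  integral_nonneg : ∀ {f : X → ℝ}, f ∈ U → (∀ x, 0 ≤ f x) → 0 ≤ integral f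
  integral_tendsto_zero : ∀ f : ℕ → X → ℝ, (∀ n, f n ∈ U) → Antitone f →
    (∀ x, Tendsto (fun n => f n x) atTop (𝓝 (0 : ℝ))) →
    Tendsto (fun n => integral (f n)) atTop (𝓝 (0 : ℝ))

/-- `f ≃ ∑ fₙ` : the `fₙ` belong to `U`, `∑ ∫|fₙ| < ∞`, and `f x = ∑ fₙ x` at every
point where the series converges absolutely. -/
def DaniellSpace.Rep {X : Type*} (D : DaniellSpace X) (f : X → ℝ) (fs : ℕ → X → ℝ) : Prop :=
  (∀ n, fs n ∈ D.U) ∧ (Summable fun n => D.integral |fs n|) ∧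
  ∀ x, (Summable fun n => |fs n x|) → HasSum (fun n => fs n x) (f x)

/-- The extension `𝒰*` of `𝒰`. -/
def DaniellSpace.Ustar {X : Type*} (D : DaniellSpace X) : Set (X → ℝ) :=
  {f | ∃ fs, D.Rep f fs}

-- The integral on `𝒰*`: `∫ f = ∑ ∫ fₙ` for any representation `f ≃ ∑ fₙ`
-- (the value is independent of the representation).
open Classical in
noncomputable def DaniellSpace.integralStar {X : Type*} (D : DaniellSpace X)
    (f : X → ℝ) : ℝ :=
  if h : ∃ fs, D.Rep f fs then ∑' n, D.integral (h.choose n) else 0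

/-- A Daniell space is complete if `f ≃ ∑ fₙ` with all `fₙ ∈ 𝒰` implies `f ∈ 𝒰`. -/
def DaniellSpace.Complete {X : Type*} (D : DaniellSpace X) : Prop :=
  ∀ (f : X → ℝ) (fs : ℕ → X → ℝ), D.Rep f fs → f ∈ D.U

/-- A null set: its characteristic function is a null function. -/
def DaniellSpace.NullSet {X : Type*} (D : DaniellSpace X) (S : Set X) : Prop :=
  S.indicator (fun _ => (1 : ℝ)) ∈ D.U ∧ D.integral (S.indicator fun _ => (1 : ℝ)) = 0

namespace DaniellSpace
variable {X : Type*} (D : DaniellSpace X)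

lemma neg_mem {f : X → ℝ} (hf : f ∈ D.U) : -f ∈ D.U := by
  have := D.smul_mem (-1) hf
  simpa using this

lemma abs_mem {f : X → ℝ} (hf : f ∈ D.U) : |f| ∈ D.U := by
  have h : |f| = f ⊔ (-f) := rfl
  rw [h]; exact D.sup_mem hf (D.neg_mem hf)

lemma integral_zero : D.integral 0 = 0 := by
  have := D.integral_smul 0 D.zero_mem
  simpa using this

lemma sum_mem (s : Finset ℕ) (g : ℕ → X → ℝ) (h : ∀ n, g n ∈ D.U) :
    (∑ n ∈ s, g n) ∈ D.U := by
  classical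
  induction s using Finset.induction_on with
  | empty => simpa using D.zero_mem
  | insert _ _ hx ih => rw [Finset.sum_insert hx]; exact D.add_mem (h _) ih

lemma integral_sum (s : Finset ℕ) (g : ℕ → X → ℝ) (h : ∀ n, g n ∈ D.U) :
    D.integral (∑ n ∈ s, g n) = ∑ n ∈ s, D.integral (g n) := by
  classical
  induction s using Finset.induction_on with
  | empty => simpa using D.integral_zero
  | insert _ _ hx ih =>
    rw [Finset.sum_insert hx, Finset.sum_insert hx,
      D.integral_add (h _) (D.sum_mem _ g h), ih]

lemma integral_mono {f g : X → ℝ} (hf : f ∈ D.U) (hg : g ∈ D.U)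
    (h : ∀ x, f x ≤ g x) : D.integral f ≤ D.integral g := by
  have hsub : g + (-1 : ℝ) • f ∈ D.U := D.add_mem hg (D.smul_mem _ hf)
  have h0 : 0 ≤ D.integral (g + (-1 : ℝ) • f) := by
    refine D.integral_nonneg hsub fun x => ?_
    simpa using sub_nonneg.mpr (h x)
  rw [D.integral_add hg (D.smul_mem _ hf), D.integral_smul _ hf] at h0
  linarith

lemma abs_integral_le {f : X → ℝ} (hf : f ∈ D.U) :
    |D.integral f| ≤ D.integral |f| := by
  have h1 : D.integral f ≤ D.integral |f| :=
    D.integral_mono hf (D.abs_mem hf) fun x => le_abs_self _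
  have h2 : D.integral ((-1 : ℝ) • f) ≤ D.integral |f| := by
    refine D.integral_mono (D.smul_mem _ hf) (D.abs_mem hf) fun x => ?_
    simpa using neg_abs_le (f x) |>.trans (le_refl _) |> fun _ => neg_le_abs (f x)
  rw [D.integral_smul _ hf] at h2
  rw [abs_le]; constructor <;> linarith

end DaniellSpace

set_option maxHeartbeats 1000000 in
/-- If `f ≃ ∑ fₙ` and `f ≥ 0`, then `∑ ∫fₙ ≥ 0`. -/
theorem daniell_rep_nonneg {X : Type*} [Nonempty X] (D : DaniellSpace X)
    (f : X → ℝ) (fs : ℕ → X → ℝ) (hrep : D.Rep f fs) (hf : ∀ x, 0 ≤ f x) :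
    0 ≤ ∑' n, D.integral (fs n) := by
  obtain ⟨hmem, hsum, hpt⟩ := hrep
  have habs_le : ∀ n, |D.integral (fs n)| ≤ D.integral |fs n| :=
    fun n => D.abs_integral_le (hmem n)
  have hsumI : Summable fun n => D.integral (fs n) :=
    (Summable.of_nonneg_of_le (fun n => abs_nonneg _) habs_le hsum).of_abs
  -- the tail of the absolute integrals
  set T : ℕ → ℝ := fun N => ∑' n, D.integral |fs (n + N)| with hT
  have hsumT : ∀ N, Summable fun n => D.integral |fs (n + N)| :=
    fun N => (summable_nat_add_iff N).mpr hsum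
  -- Key estimate: for each N, 0 ≤ ∑_{n<N} ∫ fs n + T N
  have key : ∀ N : ℕ, 0 ≤ (∑ n ∈ Finset.range N, D.integral (fs n)) + T N := by
    intro N
    set g : ℕ → X → ℝ := fun m =>
      (∑ n ∈ Finset.range N, fs n) + ∑ n ∈ Finset.range m, |fs (n + N)| with hgdef
    have hgmem : ∀ m, g m ∈ D.U := fun m =>
      D.add_mem (D.sum_mem _ _ hmem) (D.sum_mem _ _ fun n => D.abs_mem (hmem _))
    have hgmono : ∀ a b, a ≤ b → ∀ x, g a x ≤ g b x := by
      intro a b hab x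
      simp only [hgdef, Pi.add_apply, Finset.sum_apply]
      gcongr
      intro i _ _
      simp
    set gneg : ℕ → X → ℝ := fun m => (-(g m)) ⊔ 0 with hgn
    have hgnmem : ∀ m, gneg m ∈ D.U :=
      fun m => D.sup_mem (D.neg_mem (hgmem m)) D.zero_mem
    have hgnanti : Antitone gneg := by
      intro a b hab x
      simp only [hgn, Pi.sup_apply, Pi.neg_apply, Pi.zero_apply]
      exact max_le_max (neg_le_neg (hgmono a b hab x)) le_rfl
    have hptzero : ∀ x, Tendsto (fun m => gneg m x) atTop (𝓝 (0 : ℝ)) := by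
      intro x
      by_cases hx : Summable fun n => |fs n x|
      · have hxs : Summable fun n => fs n x := hx.of_abs
        have hfx : HasSum (fun n => fs n x) (f x) := hpt x hx
        have htail : Summable fun n => |fs (n + N) x| := (summable_nat_add_iff N).mpr hx
        set C : ℝ := (∑ n ∈ Finset.range N, fs n x) + ∑' n, |fs (n + N) x| with hC
        have hgx : Tendsto (fun m => g m x) atTop (𝓝 C) := by
          have h2 := htail.hasSum.tendsto_sum_nat
          have := (tendsto_const_nhds (x := ∑ n ∈ Finset.range N, fs n x)
            (f := atTop)).add h2
          simpa [hgdef, Finset.sum_apply] using this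
        have hC0 : 0 ≤ C := by
          have hsplit : (∑ n ∈ Finset.range N, fs n x) + ∑' n, fs (n + N) x = f x := by
            rw [← hfx.tsum_eq]; exact Summable.sum_add_tsum_nat_add N hxs
          have hle : ∑' n, fs (n + N) x ≤ ∑' n, |fs (n + N) x| :=
            Summable.tsum_le_tsum (fun n => le_abs_self _) ((summable_nat_add_iff N).mpr hxs) htail
          have := hf x
          simp only [hC]; linarith
        have : Tendsto (fun m => max (-(g m x)) (0 : ℝ)) atTop (𝓝 (max (-C) 0)) :=
          (hgx.neg).max tendsto_const_nhds
        have h0 : max (-C) (0 : ℝ) = 0 := max_eq_right (neg_nonpos.mpr hC0)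
        rw [h0] at this
        simpa [hgn, Pi.sup_apply] using this
      · have htail : ¬ Summable fun n => |fs (n + N) x| :=
          fun h => hx ((summable_nat_add_iff N).mp h)
        have hdiv : Tendsto (fun m => ∑ n ∈ Finset.range m, |fs (n + N) x|) atTop atTop :=
          (not_summable_iff_tendsto_nat_atTop_of_nonneg (fun n => abs_nonneg _)).mp htail
        have hgx : Tendsto (fun m => g m x) atTop atTop := by
          have := tendsto_atTop_add_const_left atTop
            (∑ n ∈ Finset.range N, fs n x) hdiv
          simpa [hgdef, Finset.sum_apply] using this
        have hev : ∀ᶠ m in atTop, gneg m x = 0 := by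
          filter_upwards [hgx.eventually_ge_atTop 0] with m hm
          simp only [hgn, Pi.sup_apply, Pi.neg_apply, Pi.zero_apply]
          exact sup_eq_right.mpr (neg_nonpos.mpr hm)
        exact Tendsto.congr' (hev.mono fun m hm => hm.symm) tendsto_const_nhds
    have hint : Tendsto (fun m => D.integral (gneg m)) atTop (𝓝 0) :=
      D.integral_tendsto_zero gneg hgnmem hgnanti hptzero
    have hlow : ∀ m, -D.integral (gneg m) ≤ D.integral (g m) := by
      intro m
      have h0 : 0 ≤ D.integral (g m + gneg m) := by
        refine D.integral_nonneg (D.add_mem (hgmem m) (hgnmem m)) fun x => ?_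
        simp only [Pi.add_apply, hgn, Pi.sup_apply, Pi.neg_apply, Pi.zero_apply]
        have := le_sup_left (a := -(g m x)) (b := (0 : ℝ))
        linarith
      rw [D.integral_add (hgmem m) (hgnmem m)] at h0
      linarith
    have hval : ∀ m, D.integral (g m) =
        (∑ n ∈ Finset.range N, D.integral (fs n)) +
        ∑ n ∈ Finset.range m, D.integral |fs (n + N)| := by
      intro m
      rw [hgdef]
      rw [D.integral_add (D.sum_mem _ _ hmem) (D.sum_mem _ _ fun n => D.abs_mem (hmem _)),
        D.integral_sum _ _ hmem, D.integral_sum _ _ fun n => D.abs_mem (hmem _)]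
    have hBt : Tendsto (fun m => D.integral (g m)) atTop
        (𝓝 ((∑ n ∈ Finset.range N, D.integral (fs n)) + T N)) := by
      have h2 := (hsumT N).hasSum.tendsto_sum_nat
      have := (tendsto_const_nhds (x := ∑ n ∈ Finset.range N, D.integral (fs n))
        (f := atTop)).add h2
      refine this.congr fun m => (hval m).symm
    have := le_of_tendsto_of_tendsto' (hint.neg) hBt hlow
    simpa using this
  -- conclude
  have hTtend : Tendsto T atTop (𝓝 0) := by
    simpa [hT] using tendsto_sum_nat_add fun n => D.integral |fs n|
  have hmain : ∀ N, -(2 * T N) ≤ ∑' n, D.integral (fs n) := by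
    intro N
    have hsplit : (∑ n ∈ Finset.range N, D.integral (fs n)) +
        ∑' n, D.integral (fs (n + N)) = ∑' n, D.integral (fs n) :=
      Summable.sum_add_tsum_nat_add N hsumI
    have htail_le : |∑' n, D.integral (fs (n + N))| ≤ T N := by
      calc |∑' n, D.integral (fs (n + N))| ≤ ∑' n, |D.integral (fs (n + N))| := by
            simpa [Real.norm_eq_abs] using
              norm_tsum_le_tsum_norm (f := fun n => D.integral (fs (n + N)))
                (by simpa [Real.norm_eq_abs] using ((summable_nat_add_iff N).mpr hsumI).abs)
        _ ≤ T N := Summable.tsum_le_tsum (fun n => habs_le _)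
            (((summable_nat_add_iff N).mpr hsumI).abs) (hsumT N)
    have h1 := key N
    have h2 := abs_le.mp htail_le
    linarith [h2.1]
  have : Tendsto (fun N => -(2 * T N)) atTop (𝓝 (0 : ℝ)) := by
    have := (hTtend.const_mul 2).neg
    simpa using this
  have := le_of_tendsto' this hmain
  simpa using this
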